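/- Let f : ℝ → ℝ satisfy f(0) = 0, and assume f has a right derivative β at 0 and a left derivative α at 0 (i.e. f(t)/t → β as t → 0⁺ and f(t)/t → α as t → 0⁻). If f(y) = y²/4 + 2·f(y/2) for all y ∈ ℝ, then f(y) = y²/2 + β·y for all y > 0 and f(y) = y²/2 + α·y for all y < 0. -/

import Mathlib

private lemma stmt6_key (f : ℝ → ℝ) (heq : ∀ y : ℝ, f y = y ^ 2 / 4 + 2 * f (y / 2))
    (y : ℝ) : ∀ n : ℕ, f y = y ^ 2 / 2 * (1 - (1/2 : ℝ) ^ n) + 2 ^ n * f (y / 2 ^ n) := by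
  intro n
  induction n with
  | zero => simp
  | succ n ih =>
    rw [ih, heq (y / 2 ^ n)]
    have : y / 2 ^ n / 2 = y / 2 ^ (n + 1) := by ring
    rw [this]
    have h2 : (2:ℝ) ^ n ≠ 0 := by positivity
    field_simp
    have h3 : (1/2:ℝ) ^ n * 2 ^ n = 1 := by rw [← mul_pow]; norm_num
    linear_combination (-2 * y ^ 2) * h3

private lemma stmt6_side (f : ℝ → ℝ) (c : ℝ) (S : Set ℝ)
    (hc : Filter.Tendsto (fun t => f t / t) (nhdsWithin 0 S) (nhds c))
    (heq : ∀ y : ℝ, f y = y ^ 2 / 4 + 2 * f (y / 2))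
    (y : ℝ) (hy : y ≠ 0) (hmem : ∀ n : ℕ, y / 2 ^ n ∈ S) :
    f y = y ^ 2 / 2 + c * y := by
  have h2 : ∀ n : ℕ, (2 : ℝ) ^ n ≠ 0 := fun n => by positivity
  have htend0 : Filter.Tendsto (fun n : ℕ => y / 2 ^ n) Filter.atTop (nhds 0) := by
    have : Filter.Tendsto (fun n : ℕ => y * (1/2 : ℝ) ^ n) Filter.atTop (nhds (y * 0)) :=
      (tendsto_pow_atTop_nhds_zero_of_lt_one (by norm_num) (by norm_num)).const_mul y
    simpa [div_eq_mul_inv, inv_pow] using this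
  have htendS : Filter.Tendsto (fun n : ℕ => y / 2 ^ n) Filter.atTop (nhdsWithin 0 S) :=
    tendsto_nhdsWithin_of_tendsto_nhds_of_eventually_within _ htend0
      (Filter.Eventually.of_forall hmem)
  have hratio : Filter.Tendsto (fun n : ℕ => f (y / 2 ^ n) / (y / 2 ^ n)) Filter.atTop (nhds c) :=
    hc.comp htendS
  have heqn : ∀ n : ℕ, (2 : ℝ) ^ n * f (y / 2 ^ n) = y * (f (y / 2 ^ n) / (y / 2 ^ n)) := by
    intro n
    field_simp
  have htail : Filter.Tendsto (fun n : ℕ => (2 : ℝ) ^ n * f (y / 2 ^ n)) Filter.atTop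
      (nhds (y * c)) := by
    simp only [heqn]
    exact hratio.const_mul y
  have hpow : Filter.Tendsto (fun n : ℕ => y ^ 2 / 2 * (1 - (1/2 : ℝ) ^ n)) Filter.atTop
      (nhds (y ^ 2 / 2 * (1 - 0))) :=
    (Filter.Tendsto.const_sub 1
      (tendsto_pow_atTop_nhds_zero_of_lt_one (by norm_num) (by norm_num))).const_mul _
  have hall : Filter.Tendsto (fun n : ℕ => y ^ 2 / 2 * (1 - (1/2 : ℝ) ^ n)
      + 2 ^ n * f (y / 2 ^ n)) Filter.atTop (nhds (y ^ 2 / 2 * (1 - 0) + y * c)) :=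
    hpow.add htail
  have hconst : Filter.Tendsto (fun _ : ℕ => f y) Filter.atTop (nhds (f y)) :=
    tendsto_const_nhds
  have := tendsto_nhds_unique (by simpa only [← stmt6_key f heq y] using hall) hconst
  rw [← this]; ring

theorem stmt_6 (f : ℝ → ℝ) (α β : ℝ) (hf0 : f 0 = 0)
    (hβ : Filter.Tendsto (fun t => f t / t) (nhdsWithin 0 (Set.Ioi 0)) (nhds β))
    (hα : Filter.Tendsto (fun t => f t / t) (nhdsWithin 0 (Set.Iio 0)) (nhds α))
    (heq : ∀ y : ℝ, f y = y ^ 2 / 4 + 2 * f (y / 2)) :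
    (∀ y > 0, f y = y ^ 2 / 2 + β * y) ∧ (∀ y < 0, f y = y ^ 2 / 2 + α * y) := by
  constructor
  · intro y hy
    exact stmt6_side f β _ hβ heq y (ne_of_gt hy) (fun n => div_pos hy (by positivity))
  · intro y hy
    refine stmt6_side f α _ hα heq y (ne_of_lt hy) (fun n => ?_)
    have : (0:ℝ) < 2 ^ n := by positivity
    exact div_neg_of_neg_of_pos hy this
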